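/- Let d ≥ 1 and n ≥ 1, and let ρ : [0,∞)^n → [0,∞) be Borel measurable, nondecreasing in each coordinate, satisfy ρ(y_1,...,y_n) = 0 whenever some y_j = 0, and suppose there is C < ∞ with ρ(λ_1 y_1, ..., λ_n y_n) ≤ C · (max_i λ_i) · ρ(y_1,...,y_n) for all 0 < λ_i, y_i < ∞. Then there exists C' < ∞ such that ∫_{ℝ^d} ρ(f_1(x), ..., f_n(x)) dx ≤ C' · ρ(∫ f_1, ..., ∫ f_n) for all nonnegative f_1, ..., f_n ∈ L¹(ℝ^d). -/

import Mathlib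

open MeasureTheory ENNReal

noncomputable section

theorem stmt18 (d n : ℕ) (hd : 0 < d) (hn : 0 < n)
    (ρ : (Fin n → ℝ) → ℝ) (hρmeas : Measurable ρ)
    (hρ0 : ∀ y : Fin n → ℝ, (∀ i, 0 ≤ y i) → 0 ≤ ρ y)
    (hρmono : ∀ y z : Fin n → ℝ, (∀ i, 0 ≤ y i) → (∀ i, y i ≤ z i) → ρ y ≤ ρ z)
    (hρzero : ∀ y : Fin n → ℝ, (∀ i, 0 ≤ y i) → (∃ i, y i = 0) → ρ y = 0)
    (C : ℝ)
    (hρscale : ∀ lam y : Fin n → ℝ, (∀ i, 0 < lam i) → (∀ i, 0 < y i) →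
      ρ (fun i => lam i * y i) ≤ C * (⨆ i, lam i) * ρ y) :
    ∃ C' : ℝ, ∀ f : Fin n → (Fin d → ℝ) → ℝ,
      (∀ i, ∀ x, 0 ≤ f i x) → (∀ i, Integrable (f i)) →
      ∫⁻ x : Fin d → ℝ, ENNReal.ofReal (ρ (fun i => f i x))
        ≤ ENNReal.ofReal (C' * ρ (fun i => ∫ x, f i x)) := by
  haveI : Nonempty (Fin n) := Fin.pos_iff_nonempty.mp hn
  refine ⟨n * max C 0, fun f hf hint => ?_⟩
  set I : Fin n → ℝ := fun i => ∫ x, f i x with hI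
  have hInn : ∀ i, 0 ≤ I i := fun i => integral_nonneg (hf i)
  by_cases hzero : ∃ i, I i = 0
  · -- LHS is zero a.e.
    obtain ⟨i, hi⟩ := hzero
    have hfz : f i =ᵐ[volume] 0 :=
      (integral_eq_zero_iff_of_nonneg (fun x => hf i x) (hint i)).mp hi
    have h0 : ∫⁻ x : Fin d → ℝ, ENNReal.ofReal (ρ (fun j => f j x)) = 0 := by
      rw [← lintegral_zero]
      apply lintegral_congr_ae
      filter_upwards [hfz] with x hx
      simp only [Pi.zero_apply] at hx
      rw [hρzero _ (fun j => hf j x) ⟨i, hx⟩, ENNReal.ofReal_zero]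
    rw [h0]
    exact zero_le
  · push_neg at hzero
    have hIpos : ∀ i, 0 < I i := fun i => lt_of_le_of_ne (hInn i) (Ne.symm (hzero i))
    set S : (Fin d → ℝ) → ℝ := fun x => ∑ i, f i x / I i with hS
    have hSnn : ∀ x, 0 ≤ S x := fun x =>
      Finset.sum_nonneg fun i _ => div_nonneg (hf i x) (hInn i)
    have hρI : 0 ≤ ρ I := hρ0 I hInn
    -- pointwise bound
    have hpt : ∀ x, ρ (fun i => f i x) ≤ max C 0 * ρ I * S x := by
      intro x
      rcases eq_or_lt_of_le (hSnn x) with hS0 | hSpos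
      · have hall : ∀ i, f i x = 0 := by
          intro i
          have := (Finset.sum_eq_zero_iff_of_nonneg
            (fun j _ => div_nonneg (hf j x) (hInn j))).mp hS0.symm i (Finset.mem_univ i)
          have := div_eq_zero_iff.mp this
          rcases this with h | h
          · exact h
          · exact absurd h (ne_of_gt (hIpos i))
        rw [hρzero _ (fun j => hf j x) ⟨Classical.arbitrary _, hall _⟩, ← hS0, mul_zero]
      · have hmono : ρ (fun i => f i x) ≤ ρ (fun i => S x * I i) := by
          apply hρmono _ _ (fun i => hf i x)
          intro i
          rw [← div_le_iff₀ (hIpos i)] at *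
          exact Finset.single_le_sum (fun j _ => div_nonneg (hf j x) (hInn j))
            (Finset.mem_univ i)
        have hscale := hρscale (fun _ => S x) I (fun _ => hSpos) hIpos
        rw [ciSup_const] at hscale
        calc ρ (fun i => f i x) ≤ C * S x * ρ I := hmono.trans hscale
          _ ≤ max C 0 * ρ I * S x := by
              rw [mul_comm (max C 0 * ρ I) (S x), ← mul_assoc, mul_comm C (S x)]
              exact mul_le_mul_of_nonneg_right
                (mul_le_mul_of_nonneg_left (le_max_left C 0) (le_of_lt hSpos)) hρI
    -- integrate
    set K : ℝ := max C 0 * ρ I with hK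
    have hKnn : 0 ≤ K := mul_nonneg (le_max_right C 0) hρI
    calc ∫⁻ x : Fin d → ℝ, ENNReal.ofReal (ρ (fun i => f i x))
        ≤ ∫⁻ x, ENNReal.ofReal (K * S x) :=
          lintegral_mono fun x => ENNReal.ofReal_le_ofReal (hpt x)
      _ = ENNReal.ofReal K * ∫⁻ x, ENNReal.ofReal (S x) := by
          simp_rw [ENNReal.ofReal_mul hKnn]
          exact lintegral_const_mul' _ _ ENNReal.ofReal_ne_top
      _ = ENNReal.ofReal K * ∑ i, ∫⁻ x, ENNReal.ofReal (f i x / I i) := by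
          congr 1
          simp_rw [hS, ENNReal.ofReal_sum_of_nonneg
            (fun i _ => div_nonneg (hf i _) (hInn i))]
          exact lintegral_finset_sum' _ fun i _ =>
            (ENNReal.measurable_ofReal.comp_aemeasurable
              ((hint i).aemeasurable.div_const _))
      _ = ENNReal.ofReal K * ∑ i : Fin n, (1 : ℝ≥0∞) := by
          congr 1
          apply Finset.sum_congr rfl
          intro i _
          simp_rw [div_eq_mul_inv, ENNReal.ofReal_mul' (inv_nonneg.mpr (hInn i))]
          rw [lintegral_mul_const' _ _ ENNReal.ofReal_ne_top,
            ← ofReal_integral_eq_lintegral_ofReal (hint i)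
              (Filter.Eventually.of_forall (hf i)),
            ← ENNReal.ofReal_mul (hInn i), mul_inv_cancel₀ (ne_of_gt (hIpos i)),
            ENNReal.ofReal_one]
      _ = ENNReal.ofReal ((n * max C 0) * ρ I) := by
          rw [Finset.sum_const, Finset.card_univ, Fintype.card_fin, nsmul_eq_mul, mul_one,
            ← ENNReal.ofReal_natCast n, ← ENNReal.ofReal_mul hKnn, hK]
          congr 1
          ring
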